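/- arXiv:2002.06764 — 9 statements merged into one kernel-verified Lean document; each statement's English description precedes it below -/
import Mathlib

section
/- Let ≈ be an SCER and T a string of length n. For any 1 < i ≤ n, the ≈-border array satisfies Border_T[i−1] + 1 ≥ Border_T[i]. -/
variable {α : Type*}

/-- `substr X i j` is the 1-indexed inclusive substring `X[i:j]`. -/
def substr (X : List α) (i j : ℕ) : List α := (X.take j).drop (i - 1)

/-- A substring consistent equivalence relation (SCER). -/
structure SCER (r : List α → List α → Prop) : Prop where
  equiv : Equivalence r
  length_eq : ∀ X Y, r X Y → X.length = Y.length
  substr_congr : ∀ X Y, r X Y → ∀ i j, 1 ≤ i → i ≤ j → j ≤ X.length →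
    r (substr X i j) (substr Y i j)

/-- `B` is a `≈`-border of `T`: `B` is equivalent to a prefix and a suffix of `T`. -/
def IsBorder (r : List α → List α → Prop) (B T : List α) : Prop :=
  B.length ≤ T.length ∧ r B (T.take B.length) ∧ r B (T.drop (T.length - B.length))

/-- `C` is a `≈`-cover of `T`: there are occurrences `x 1 = 1 < ... < x m = |T|-|C|+1`
with consecutive gaps at most `|C|`. -/
def IsCover (r : List α → List α → Prop) (C T : List α) : Prop :=
  ∃ (m : ℕ) (x : ℕ → ℕ), 1 ≤ m ∧ x 1 = 1 ∧ x m = T.length - C.length + 1 ∧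
    (∀ k, 1 ≤ k → k ≤ m → r C (substr T (x k) (x k + C.length - 1))) ∧
    (∀ k, 1 < k → k ≤ m → x (k - 1) < x k ∧ x k ≤ x (k - 1) + C.length)

def IsProperCover (r : List α → List α → Prop) (C T : List α) : Prop :=
  IsCover r C T ∧ C.length < T.length

/-- A string is primitive if it has no proper `≈`-cover. -/
def Primitive (r : List α → List α → Prop) (T : List α) : Prop :=
  ¬ ∃ C : List α, IsProperCover r C T

/-- `S` is a left `≈`-seed of `T`. -/
def IsLeftSeed (r : List α → List α → Prop) (S T : List α) : Prop :=
  ∃ k l, k ≤ l ∧ l < S.length ∧ IsCover r S (T.take (T.length - k)) ∧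
    r (S.take l) (T.drop (T.length - l))

/-- `Bd` is the `≈`-border array of `T`:
`Bd i` is the maximum length of a proper `≈`-border of `T[1:i]`. -/
def BorderArr (r : List α → List α → Prop) (T : List α) (Bd : ℕ → ℕ) : Prop :=
  ∀ i, 1 ≤ i → i ≤ T.length →
    IsGreatest {b | ∃ B : List α, B.length = b ∧ b < i ∧ IsBorder r B (T.take i)} (Bd i)

/-- `L` is the longest `≈`-cover array of `T`:
`L i = max({|C| : C proper ≈-cover of T[1:i]} ∪ {0})`. -/
def LCoverArr (r : List α → List α → Prop) (T : List α) (L : ℕ → ℕ) : Prop :=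
  ∀ i, 1 ≤ i → i ≤ T.length →
    IsGreatest (insert 0 {c | ∃ C : List α, C.length = c ∧ IsProperCover r C (T.take i)})
      (L i)

theorem stmt5 (r : List α → List α → Prop) (h : SCER r) (T : List α) (Bd : ℕ → ℕ)
    (hB : BorderArr r T Bd) (i : ℕ) (h1 : 1 < i) (h2 : i ≤ T.length) :
    Bd i ≤ Bd (i - 1) + 1 := by
  obtain ⟨⟨B, hBl, hbi, hle, hpre, hsuf⟩, -⟩ := hB i (by omega) h2
  set b := Bd i with hb
  by_cases hb2 : b ≤ 1
  · omega
  push_neg at hb2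
  have hTi : (T.take i).length = i := by simp [Nat.min_eq_left h2]
  rw [hBl] at hpre hsuf
  rw [hTi] at hsuf
  have hBlen : (B.take (b-1)).length = b - 1 := by
    rw [List.length_take, hBl]; omega
  -- prefix part
  have hpre' : r (B.take (b-1)) ((T.take (i-1)).take (b-1)) := by
    have hc := h.substr_congr B ((T.take i).take b) hpre 1 (b-1) le_rfl (by omega)
      (by omega)
    simp only [substr, Nat.sub_self, List.drop_zero] at hc
    have e1 : ((T.take i).take b).take (b-1) = (T.take (i-1)).take (b-1) := by
      simp only [List.take_take]; congr 1; omega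
    rwa [e1] at hc
  -- suffix part
  have hsuf' : r (B.take (b-1)) ((T.take (i-1)).drop ((i-1) - (b-1))) := by
    have hc := h.substr_congr B ((T.take i).drop (i - b)) hsuf 1 (b-1) le_rfl (by omega)
      (by omega)
    simp only [substr, Nat.sub_self, List.drop_zero] at hc
    have e2 : ((T.take i).drop (i - b)).take (b-1) = (T.take (i-1)).drop ((i-1)-(b-1)) := by
      rw [show ((T.take i).drop (i-b)).take (b-1)
            = ((T.take i).take ((i-b)+(b-1))).drop (i-b) by
          conv_rhs => rw [List.drop_take]
          congr 1; omega]
      simp only [List.take_take]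
      congr 1
      · omega
      · congr 1; omega
    rwa [e2] at hc
  have hmem : b - 1 ∈ {c | ∃ B : List α, B.length = c ∧ c < i - 1 ∧
      IsBorder r B (T.take (i-1))} := by
    refine ⟨B.take (b-1), hBlen, by omega, ?_, ?_, ?_⟩
    · rw [hBlen, List.length_take]; omega
    · rwa [hBlen]
    · rwa [hBlen, List.length_take, Nat.min_eq_left (by omega : i - 1 ≤ T.length)]
  have := (hB (i-1) (by omega) (by omega)).2 hmem
  omega
end

section
/- Let ≈ be an SCER. If C is a ≈-cover of T, B is a ≈-border of T, and |C| ≤ |B|, then C is a ≈-cover of B. -/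
variable {α : Type*}

theorem stmt6 (r : List α → List α → Prop) (h : SCER r) (T C B : List α)
    (hC : IsCover r C T) (hB : IsBorder r B T) (hlen : C.length ≤ B.length) :
    IsCover r C B := by
  classical
  obtain ⟨m, x, hm, hx1, hxm, hocc, hchain⟩ := hC
  obtain ⟨hbn, hpref, hsuf⟩ := hB
  set n := T.length with hn
  set b := B.length with hb
  set c := C.length with hc
  -- monotonicity of occurrence positions
  have mono : ∀ i k, 1 ≤ i → i ≤ k → k ≤ m → x i ≤ x k := by
    intro i k hi hik hkm
    induction k with
    | zero => omega
    | succ k ih =>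
      rcases Nat.lt_or_ge i (k+1) with hlt | hge
      · have hik' : i ≤ k := by omega
        have h1k : 1 ≤ k := by omega
        have := hchain (k+1) (by omega) hkm
        have hk1 : (k+1) - 1 = k := by omega
        rw [hk1] at this
        have := ih (by omega) (by omega)
        omega
      · have : i = k + 1 := by omega
        rw [this]
  -- degenerate case c = 0
  by_cases hc0 : c = 0
  · have hn0 : n = 0 := by
      rcases Nat.lt_or_ge 1 m with h1m | h1m
      · have := hchain m h1m le_rfl
        have := mono 1 (m-1) le_rfl (by omega) (by omega)
        omega
      · have : m = 1 := by omega
        rw [this] at hxm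
        omega
    have hT : T = [] := List.length_eq_zero_iff.mp hn0
    have hBnil : B = [] := List.length_eq_zero_iff.mp (by omega)
    refine ⟨1, fun _ => 1, le_rfl, rfl, by simp [hBnil, ← hc, hc0], ?_, by omega⟩
    intro k hk1 hk2
    have := hocc 1 le_rfl hm
    rw [hx1] at this
    simpa [substr, hBnil, hc0] using (by simpa [substr, hT, hc0] using this)
  have hc1 : 1 ≤ c := by omega
  have hcb : c ≤ b := hlen
  -- position of the final occurrence in B
  set p := b - c + 1 with hp
  -- transfer of occurrences into B via the prefix equivalence
  have occB : ∀ q, 1 ≤ q → q + c - 1 ≤ b → r C (substr T q (q + c - 1)) →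
      r C (substr B q (q + c - 1)) := by
    intro q hq1 hqb hr
    have h1 := h.substr_congr B (T.take b) hpref q (q + c - 1) hq1 (by omega) (by omega)
    have h2 : substr (T.take b) q (q + c - 1) = substr T q (q + c - 1) := by
      simp [substr, List.take_take, min_eq_left hqb]
    rw [h2] at h1
    exact h.equiv.trans hr (h.equiv.symm h1)
  -- the final occurrence in B via the suffix equivalence
  have occLast : r C (substr B p b) := by
    have hcn : c ≤ n := le_trans hcb hbn
    have hlastT := hocc m hm le_rfl
    rw [hxm] at hlastT
    have hsub := h.substr_congr B (T.drop (n - b)) hsuf p b (by omega) (by omega) (by omega)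
    have heq : substr (T.drop (n - b)) p b = substr T (n - c + 1) (n - c + 1 + c - 1) := by
      simp only [substr, List.take_drop, List.drop_drop]
      congr 1
      · omega
      · congr 1
        omega
    rw [heq] at hsub
    exact h.equiv.trans hlastT (h.equiv.symm hsub)
  have hp1 : x 1 ≤ p := by omega
  set P := fun k => k ≤ m ∧ x k ≤ p with hP
  set j := Nat.findGreatest P m with hj
  have hj1 : 1 ≤ j := Nat.le_findGreatest hm ⟨hm, hp1⟩
  have hjspec : P j := Nat.findGreatest_spec hm ⟨hm, hp1⟩
  obtain ⟨hjm, hxjp⟩ := hjspec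
  rcases eq_or_lt_of_le hxjp with hcase | hcase
  · -- x j = p : the first j occurrences suffice
    refine ⟨j, x, hj1, hx1, by rw [hcase], ?_, ?_⟩
    · intro k hk1 hkj
      have hxk : x k ≤ p := le_of_le_of_eq (mono k j hk1 hkj hjm) hcase
      exact occB (x k) (by have := mono 1 k le_rfl hk1 (le_trans hkj hjm); omega)
        (by omega) (hocc k hk1 (le_trans hkj hjm))
    · intro k hk1 hkj
      exact hchain k hk1 (le_trans hkj hjm)
  · -- x j < p : append one occurrence at position p
    have hjltm : j < m := by
      rcases eq_or_lt_of_le hjm with hEq | hlt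
      · exfalso; rw [hEq] at hcase; omega
      · exact hlt
    have hnotP : ¬ P (j + 1) := Nat.findGreatest_is_greatest (n := m) (k := j + 1) (by omega) (by omega)
    have hxj1 : p < x (j+1) := by
      by_contra hcon
      exact hnotP ⟨by omega, by omega⟩
    have hch := hchain (j+1) (by omega) (by omega)
    have hjeq : (j+1) - 1 = j := by omega
    rw [hjeq] at hch
    refine ⟨j + 1, fun k => if k ≤ j then x k else p, by omega, ?_, ?_, ?_, ?_⟩
    · simp [hj1, hx1]
    · simp
      omega
    · intro k hk1 hkj
      by_cases hkle : k ≤ j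
      · simp only [if_pos hkle]
        have hxk : x k ≤ p := le_trans (mono k j hk1 hkle hjm) (le_of_lt hcase)
        exact occB (x k) (by have := mono 1 k le_rfl hk1 (le_trans hkle hjm); omega)
          (by omega) (hocc k hk1 (le_trans hkle hjm))
      · simp only [if_neg hkle]
        have hpb : p + c - 1 = b := by omega
        rw [hpb]
        exact occLast
    · intro k hk1 hkj
      by_cases hkle : k ≤ j
      · have hk1le : k - 1 ≤ j := by omega
        simp only [if_pos hkle, if_pos hk1le]
        exact hchain k hk1 (by omega)
      · have hk : k = j + 1 := by omega
        have hk1eq : k - 1 = j := by omega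
        simp only [hk1eq, if_pos (le_refl j), if_neg hkle]
        omega
end

section
/- Let ≈ be an SCER. If C and C' are both ≈-covers of T with |C| ≤ |C'|, then C is a ≈-cover of C'. -/
variable {α : Type*}

lemma substr_prefix (T : List α) (c' i j : ℕ) (hj : j ≤ c') :
    substr (substr T 1 c') i j = substr T i j := by
  simp only [substr, Nat.sub_self, List.drop_zero, List.take_take,
    Nat.min_eq_left hj]

lemma substr_suffix (T : List α) (s i j : ℕ) (hi : 1 ≤ i) :
    substr (substr T (s+1) T.length) i j = substr T (s+i) (s+j) := by
  simp only [substr, Nat.add_sub_cancel, List.take_length]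
  rw [show List.take j (List.drop s T) = List.drop s (List.take (s+j) T) by
        rw [List.drop_take]; congr 1; omega,
      List.drop_drop, show s + (i-1) = s + i - 1 by omega]

lemma isCover_of_finset (r : List α → List α → Prop) (C T : List α) (M : ℕ)
    (hM : M = T.length - C.length + 1) (S : Finset ℕ)
    (h1 : 1 ∈ S) (hMS : M ∈ S) (hub : ∀ p ∈ S, 1 ≤ p ∧ p ≤ M)
    (hocc : ∀ p ∈ S, r C (substr T p (p + C.length - 1)))
    (hnext : ∀ p ∈ S, p < M → ∃ q ∈ S, p < q ∧ q ≤ p + C.length) :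
    IsCover r C T := by
  classical
  set L := S.sort (· ≤ ·) with hLdef
  have hlenL : L.length = S.card := Finset.length_sort _
  have hmemL : ∀ a : ℕ, a ∈ L ↔ a ∈ S := fun a => Finset.mem_sort _
  have hslt : L.Pairwise (· < ·) := (Finset.sortedLT_sort S).pairwise
  have hpw := List.pairwise_iff_get.mp hslt
  have hcard : 1 ≤ S.card := Finset.card_pos.mpr ⟨1, h1⟩
  have hmono : ∀ (i j : Fin L.length), (i:ℕ) ≤ (j:ℕ) → L.get i ≤ L.get j := by
    intro i j hij
    rcases Nat.eq_or_lt_of_le hij with he | hlt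
    · have : i = j := Fin.ext he
      rw [this]
    · exact le_of_lt (hpw i j hlt)
  have hgetmem : ∀ (i : Fin L.length), L.get i ∈ S :=
    fun i => (hmemL _).mp (List.get_mem L _)
  refine ⟨S.card, fun k => L.getD (k-1) 0, hcard, ?_, ?_, ?_, ?_⟩
  · have h0 : (0:ℕ) < L.length := by omega
    show L.getD (1-1) 0 = 1
    rw [show (1:ℕ) - 1 = 0 from rfl, List.getD_eq_get _ _ ⟨0, h0⟩]
    obtain ⟨j, hj⟩ := List.mem_iff_get.mp ((hmemL 1).mpr h1)
    have hle : L.get ⟨0, h0⟩ ≤ 1 := hj ▸ hmono ⟨0, h0⟩ j (Nat.zero_le _)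
    have hge := (hub _ (hgetmem ⟨0, h0⟩)).1
    omega
  · have hlast : S.card - 1 < L.length := by omega
    show L.getD (S.card - 1) 0 = T.length - C.length + 1
    rw [List.getD_eq_get _ _ ⟨S.card - 1, hlast⟩, ← hM]
    obtain ⟨j, hj⟩ := List.mem_iff_get.mp ((hmemL M).mpr hMS)
    have hle : M ≤ L.get ⟨S.card - 1, hlast⟩ := by
      rw [← hj]
      exact hmono j ⟨S.card - 1, hlast⟩ (by have := j.isLt; simp only [Fin.val_mk]; omega)
    have := (hub _ (hgetmem ⟨S.card - 1, hlast⟩)).2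
    omega
  · intro k hk hkm
    have hik : k - 1 < L.length := by omega
    show r C (substr T (L.getD (k-1) 0) (L.getD (k-1) 0 + C.length - 1))
    rw [List.getD_eq_get _ _ ⟨k-1, hik⟩]
    exact hocc _ (hgetmem _)
  · intro k hk hkm
    have hik1 : k - 1 - 1 < L.length := by omega
    have hik : k - 1 < L.length := by omega
    show L.getD (k-1-1) 0 < L.getD (k-1) 0 ∧ L.getD (k-1) 0 ≤ L.getD (k-1-1) 0 + C.length
    rw [List.getD_eq_get _ _ ⟨k-1-1, hik1⟩, List.getD_eq_get _ _ ⟨k-1, hik⟩]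
    have hlt : L.get ⟨k-1-1, hik1⟩ < L.get ⟨k-1, hik⟩ :=
      hpw _ _ (by simp; omega)
    refine ⟨hlt, ?_⟩
    have hpmem := hgetmem ⟨k-1-1, hik1⟩
    have hpM : L.get ⟨k-1-1, hik1⟩ < M := lt_of_lt_of_le hlt (hub _ (hgetmem ⟨k-1, hik⟩)).2
    obtain ⟨q, hqS, hpq, hqle⟩ := hnext _ hpmem hpM
    obtain ⟨j, hj⟩ := List.mem_iff_get.mp ((hmemL q).mpr hqS)
    have hjge : k - 1 ≤ (j:ℕ) := by
      by_contra hcon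
      have : (j:ℕ) ≤ k - 1 - 1 := by omega
      have := hmono j ⟨k-1-1, hik1⟩ this
      omega
    have : L.get ⟨k-1, hik⟩ ≤ q := by rw [← hj]; exact hmono ⟨k-1, hik⟩ j hjge
    omega

theorem stmt7 (r : List α → List α → Prop) (h : SCER r) (T C C' : List α)
    (hC : IsCover r C T) (hC' : IsCover r C' T) (hlen : C.length ≤ C'.length) :
    IsCover r C C' := by
  classical
  obtain ⟨m, x, hm, hx1, hxm, hocc, hgap⟩ := hC
  obtain ⟨m', x', hm', hx1', hxm', hocc', hgap'⟩ := hC'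
  set n := T.length with hn
  set c := C.length with hcdef
  set c' := C'.length with hc'def
  by_cases hc0 : c = 0
  · -- degenerate case: C has length 0
    have hn0 : n = 0 := by
      rcases Nat.eq_or_lt_of_le hm with he | hlt
      · rw [← he] at hxm; omega
      · exfalso; have := hgap m hlt le_rfl; omega
    have hrCnil : r C [] := by
      have := hocc 1 le_rfl hm
      rw [hx1] at this
      simpa [substr, hc0] using this
    have hc'0 : c' = 0 := by
      have := hocc' 1 le_rfl hm'
      have hT : T = [] := List.length_eq_zero_iff.mp hn0
      have hlen2 := h.length_eq _ _ this
      rw [hT] at hlen2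
      have h0 : C'.length = 0 := by simpa [substr] using hlen2
      omega
    refine ⟨1, fun _ => 1, le_rfl, rfl, by show (1:ℕ) = C'.length - C.length + 1; omega, ?_, ?_⟩
    · intro k _ _
      have he : substr C' 1 (1 + c - 1) = [] := by simp [substr, hc0]
      show r C (substr C' 1 (1 + C.length - 1))
      rw [← hcdef, he]; exact hrCnil
    · intro k hk1 hk2
      exact absurd hk2 (by omega)
  -- main case
  have hc : 1 ≤ c := by omega
  have hc' : 1 ≤ c' := le_trans hc hlen
  have hoccC'1 : r C' (substr T 1 (1 + c' - 1)) := by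
    have := hocc' 1 le_rfl hm'; rwa [hx1'] at this
  have hc'n : c' ≤ n := by
    have hl := h.length_eq _ _ hoccC'1
    simp only [substr, List.length_drop, List.length_take] at hl
    omega
  have hcn : c ≤ n := le_trans hlen hc'n
  have hmono : ∀ k l, 1 ≤ k → k ≤ l → l ≤ m → x k ≤ x l := by
    intro k l hk hkl hlm
    induction l with
    | zero => omega
    | succ l ih =>
      rcases Nat.eq_or_lt_of_le hkl with he | hlt
      · rw [he]
      · have hg := hgap (l+1) (by omega) hlm
        rw [Nat.add_sub_cancel] at hg
        have := ih (by omega) (by omega)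
        omega
  have hxub : ∀ k, 1 ≤ k → k ≤ m → x k ≤ n - c + 1 := by
    intro k hk hkm
    rw [← hxm]; exact hmono k m hk hkm le_rfl
  have hxlb : ∀ k, 1 ≤ k → k ≤ m → 1 ≤ x k := by
    intro k hk hkm
    rw [← hx1]; exact hmono 1 k le_rfl hk hkm
  set s := n - c' with hsdef
  -- occurrence of C' as suffix of T
  have hoccC'2 : r C' (substr T (s+1) T.length) := by
    have := hocc' m' (by omega) le_rfl
    rw [hxm'] at this
    have he : n - c' + 1 + c' - 1 = T.length := by omega
    rwa [he] at this
  -- occurrence of C at position 1 of C'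
  have occ1 : r C (substr C' 1 (1 + c - 1)) := by
    have o1 : r C (substr T 1 (1 + c - 1)) := by
      have := hocc 1 le_rfl hm; rwa [hx1] at this
    have e1 : 1 + c - 1 = c := by omega
    have e2 : 1 + c' - 1 = c' := by omega
    rw [e1] at o1 ⊢
    rw [e2] at hoccC'1
    have hcg := h.substr_congr C' (substr T 1 c') hoccC'1 1 c le_rfl hc (by omega)
    rw [substr_prefix T c' 1 c hlen] at hcg
    exact h.equiv.trans o1 (h.equiv.symm hcg)
  -- occurrence of C at shifted positions of C'
  have occ_shift : ∀ k, 1 ≤ k → k ≤ m → s + 1 ≤ x k →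
      r C (substr C' (x k - s) (x k - s + c - 1)) := by
    intro k hk hkm hks
    set q := x k - s with hq
    have hq1 : 1 ≤ q := by omega
    have hxkub := hxub k hk hkm
    have hqc' : q + c - 1 ≤ c' := by omega
    have hcg := h.substr_congr C' (substr T (s+1) T.length) hoccC'2 q (q + c - 1)
      hq1 (by omega) (by omega)
    rw [substr_suffix T s q (q + c - 1) hq1] at hcg
    have e1 : s + q = x k := by omega
    have e2 : s + (q + c - 1) = x k + c - 1 := by omega
    rw [e1, e2] at hcg
    exact h.equiv.trans (hocc k hk hkm) (h.equiv.symm hcg)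
  -- minimal occurrence entering the suffix window
  have hminex : ∃ k, 1 ≤ k ∧ k ≤ m ∧ s + 1 ≤ x k ∧ x k ≤ s + c := by
    have hPex : ∃ k, 1 ≤ k ∧ k ≤ m ∧ s + 1 ≤ x k :=
      ⟨m, hm, le_rfl, by rw [hxm]; omega⟩
    obtain ⟨hk01, hk0m, hk0s⟩ := Nat.find_spec hPex
    set k0 := Nat.find hPex with hk0def
    refine ⟨k0, hk01, hk0m, hk0s, ?_⟩
    rcases Nat.eq_or_lt_of_le hk01 with he | hlt
    · have hx0 : x k0 = 1 := by rw [← he, hx1]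
      omega
    · have hnot := Nat.find_min hPex (show k0 - 1 < k0 by omega)
      have h3 : x (k0 - 1) ≤ s := by
        by_contra hcon
        exact hnot ⟨by omega, by omega, by omega⟩
      have hg := hgap k0 hlt hk0m
      omega
  -- assemble the cover of C'
  set M' := c' - c + 1 with hM'def
  set S : Finset ℕ :=
    insert 1 (((Finset.Icc 1 m).filter (fun k => s + 1 ≤ x k)).image (fun k => x k - s))
    with hSdef
  have hmemS : ∀ p : ℕ, p ∈ S ↔
      p = 1 ∨ ∃ k, (1 ≤ k ∧ k ≤ m) ∧ s + 1 ≤ x k ∧ x k - s = p := by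
    intro p
    simp [hSdef, Finset.mem_insert, Finset.mem_image, Finset.mem_filter, Finset.mem_Icc,
      and_assoc]
  apply isCover_of_finset r C C' M' (by omega) S
  · exact (hmemS 1).mpr (Or.inl rfl)
  · refine (hmemS M').mpr (Or.inr ⟨m, ⟨hm, le_rfl⟩, ?_, ?_⟩) <;> rw [hxm] <;> omega
  · intro p hp
    rcases (hmemS p).mp hp with h1 | ⟨k, ⟨hk1, hkm⟩, hks, hkp⟩
    · omega
    · have := hxub k hk1 hkm
      omega
  · intro p hp
    rcases (hmemS p).mp hp with h1 | ⟨k, ⟨hk1, hkm⟩, hks, hkp⟩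
    · rw [h1]; exact occ1
    · rw [← hkp]; exact occ_shift k hk1 hkm hks
  · intro p hp hpM'
    by_cases hcase : ∃ k, (1 ≤ k ∧ k ≤ m) ∧ s + 1 ≤ x k ∧ x k - s ≤ p
    · set K := (Finset.Icc 1 m).filter (fun k => s + 1 ≤ x k ∧ x k - s ≤ p) with hKdef
      have hKne : K.Nonempty := by
        obtain ⟨k, ⟨hk1, hkm⟩, hks, hkp⟩ := hcase
        exact ⟨k, by simp only [hKdef, Finset.mem_filter, Finset.mem_Icc]
                     exact ⟨⟨hk1, hkm⟩, hks, hkp⟩⟩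
      have hkK := K.max'_mem hKne
      set k := K.max' hKne with hkdef
      simp only [hKdef, Finset.mem_filter, Finset.mem_Icc] at hkK
      obtain ⟨⟨hk1, hkm⟩, hks, hkp⟩ := hkK
      have hxkM : x k < n - c + 1 := by omega
      have hkm' : k < m := by
        by_contra hcon
        have hkem : k = m := by omega
        rw [hkem, hxm] at hxkM
        omega
      have hg := hgap (k+1) (by omega) (by omega)
      rw [Nat.add_sub_cancel] at hg
      refine ⟨x (k+1) - s, ?_, ?_, by omega⟩
      · exact (hmemS _).mpr (Or.inr ⟨k+1, ⟨by omega, by omega⟩, by omega, rfl⟩)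
      · by_contra hle
        push_neg at hle
        have hmem : k + 1 ∈ K := by
          simp only [hKdef, Finset.mem_filter, Finset.mem_Icc]
          exact ⟨⟨by omega, by omega⟩, by omega, hle⟩
        have := K.le_max' _ hmem
        omega
    · push_neg at hcase
      obtain ⟨k0, hk01, hk0m, hk0s, hk0b⟩ := hminex
      refine ⟨x k0 - s, (hmemS _).mpr (Or.inr ⟨k0, ⟨hk01, hk0m⟩, hk0s, rfl⟩), ?_, by omega⟩
      have := hcase k0 ⟨hk01, hk0m⟩ hk0s
      omega
end

section
/- Let ≈ be an SCER. If C is a ≈-cover of T and C' is a ≈-cover of C, then C' is a ≈-cover of T (transitivity of the ≈-cover relation). -/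
variable {α : Type*}

/-! ### Auxiliary lemmas -/

lemma substr_substr' (T : List α) (a b i j : ℕ) (ha : 1 ≤ a) (hi : 1 ≤ i)
    (hj : a - 1 + j ≤ b) :
    substr (substr T a b) i j = substr T (a + i - 1) (a + j - 1) := by
  unfold substr
  rw [List.take_drop, List.take_take, Nat.min_eq_left hj, List.drop_drop]
  have h1 : a - 1 + j = a + j - 1 := by omega
  have h2 : a - 1 + (i - 1) = a + i - 1 - 1 := by omega
  rw [h1, h2]

lemma cover_len_le {r : List α → List α → Prop} (h : SCER r) {C T : List α}
    (hc : IsCover r C T) : C.length ≤ T.length := by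
  obtain ⟨m, x, hm, hx1, _, hocc, _⟩ := hc
  have h1 := h.length_eq _ _ (hocc 1 le_rfl hm)
  rw [hx1] at h1
  simp only [substr, List.length_drop, List.length_take] at h1
  omega

lemma cover_nil {r : List α → List α → Prop} {T : List α}
    (hc : IsCover r ([] : List α) T) : T = [] := by
  obtain ⟨m, x, hm, hx1, hxm, _, hgap⟩ := hc
  rcases Nat.lt_or_ge m 2 with hm2 | hm2
  · have h1 : m = 1 := by omega
    subst h1
    rw [hx1] at hxm
    simp only [List.length_nil, Nat.sub_zero] at hxm
    exact List.length_eq_zero_iff.mp (by omega)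
  · have := hgap 2 (by omega) (by omega)
    simp only [show (2:ℕ) - 1 = 1 from rfl, hx1, List.length_nil] at this
    omega

lemma cover_x_mono {m c : ℕ} {x : ℕ → ℕ} (hx1 : x 1 = 1)
    (hgap : ∀ k, 1 < k → k ≤ m → x (k - 1) < x k ∧ x k ≤ x (k - 1) + c) :
    ∀ i j, 1 ≤ i → i ≤ j → j ≤ m → x i ≤ x j := by
  intro i j hi hij hjm
  induction j, hij using Nat.le_induction with
  | base => exact le_rfl
  | succ j hij ih =>
    have h1 := hgap (j + 1) (by omega) hjm
    have h2 : j + 1 - 1 = j := by omega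
    rw [h2] at h1
    exact le_trans (ih (by omega)) (le_of_lt h1.1)

theorem stmt8 (r : List α → List α → Prop) (h : SCER r) (T C C' : List α)
    (hC : IsCover r C T) (hC' : IsCover r C' C) : IsCover r C' T := by
  classical
  by_cases hc'0 : C'.length = 0
  · have hC'nil : C' = [] := List.length_eq_zero_iff.mp hc'0
    subst hC'nil
    have hCnil : C = [] := cover_nil hC'
    subst hCnil
    have hTnil : T = [] := cover_nil hC
    subst hTnil
    exact hC'
  · have hcc : C'.length ≤ C.length := cover_len_le h hC'
    have hcn : C.length ≤ T.length := cover_len_le h hC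
    set n := T.length with hn
    set c := C.length with hc
    set c' := C'.length with hc'
    have hc'1 : 1 ≤ c' := by omega
    obtain ⟨m, x, hm, hx1, hxm, hxocc, hxgap⟩ := hC
    obtain ⟨p, y, hp, hy1, hyp, hyocc, hygap⟩ := hC'
    have hxmono := cover_x_mono hx1 hxgap
    have hymono := cover_x_mono hy1 hygap
    have hxbd : ∀ i, 1 ≤ i → i ≤ m → 1 ≤ x i ∧ x i ≤ n - c + 1 := by
      intro i h1 h2
      constructor
      · have := hxmono 1 i le_rfl h1 h2
        omega
      · have := hxmono i m h1 h2 le_rfl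
        omega
    have hybd : ∀ j, 1 ≤ j → j ≤ p → 1 ≤ y j ∧ y j ≤ c - c' + 1 := by
      intro j h1 h2
      constructor
      · have := hymono 1 j le_rfl h1 h2
        omega
      · have := hymono j p h1 h2 le_rfl
        omega
    set N := n - c' + 1 with hN
    set S : Finset ℕ := Finset.image (fun ij : ℕ × ℕ => x ij.1 + y ij.2 - 1)
      ((Finset.Icc 1 m) ×ˢ (Finset.Icc 1 p)) with hS
    have hmemS : ∀ i j, 1 ≤ i → i ≤ m → 1 ≤ j → j ≤ p → x i + y j - 1 ∈ S := by
      intro i j h1 h2 h3 h4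
      exact Finset.mem_image.mpr ⟨(i, j), by
        simp only [Finset.mem_product, Finset.mem_Icc]; exact ⟨⟨h1, h2⟩, h3, h4⟩, rfl⟩
    have hSmem : ∀ t ∈ S, ∃ i j, 1 ≤ i ∧ i ≤ m ∧ 1 ≤ j ∧ j ≤ p ∧ t = x i + y j - 1 := by
      intro t ht
      obtain ⟨⟨i, j⟩, hij, rfl⟩ := Finset.mem_image.mp ht
      simp only [Finset.mem_product, Finset.mem_Icc] at hij
      exact ⟨i, j, hij.1.1, hij.1.2, hij.2.1, hij.2.2, rfl⟩
    have hS1 : (1 : ℕ) ∈ S := by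
      have := hmemS 1 1 le_rfl hm le_rfl hp
      rw [hx1, hy1] at this
      simpa using this
    have hSN : N ∈ S := by
      have := hmemS m p hm le_rfl hp le_rfl
      rw [hxm, hyp] at this
      have he : n - c + 1 + (c - c' + 1) - 1 = N := by omega
      rwa [he] at this
    have hSocc : ∀ t ∈ S, 1 ≤ t ∧ t ≤ N ∧ r C' (substr T t (t + c' - 1)) := by
      intro t ht
      obtain ⟨i, j, h1, h2, h3, h4, rfl⟩ := hSmem t ht
      obtain ⟨hxi1, hxi2⟩ := hxbd i h1 h2
      obtain ⟨hyj1, hyj2⟩ := hybd j h3 h4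
      refine ⟨by omega, by omega, ?_⟩
      have hsc := h.substr_congr _ _ (hxocc i h1 h2) (y j) (y j + c' - 1)
        hyj1 (by omega) ?_
      · rw [substr_substr' T (x i) (x i + c - 1) (y j) (y j + c' - 1)
          hxi1 hyj1 (by omega)] at hsc
        have hgoal := h.equiv.trans (hyocc j h3 h4) hsc
        have he1 : x i + y j - 1 = x i + y j - 1 := rfl
        have he2 : x i + (y j + c' - 1) - 1 = x i + y j - 1 + c' - 1 := by omega
        rwa [he2] at hgoal
      · omega
    have hSnext : ∀ t ∈ S, t < N → ∃ b ∈ S, t < b ∧ b ≤ t + c' := by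
      intro t ht htN
      obtain ⟨i, j, h1, h2, h3, h4, rfl⟩ := hSmem t ht
      obtain ⟨hxi1, hxi2⟩ := hxbd i h1 h2
      obtain ⟨hyj1, hyj2⟩ := hybd j h3 h4
      rcases Nat.lt_or_ge j p with hjp | hjp
      · -- next occurrence inside the same copy of C
        have hg := hygap (j + 1) (by omega) (by omega)
        have he : j + 1 - 1 = j := by omega
        rw [he] at hg
        refine ⟨x i + y (j + 1) - 1, hmemS i (j + 1) h1 h2 (by omega) (by omega), ?_, ?_⟩
        · omega
        · omega
      · -- j = p : move to the next copy of C
        have hjp' : j = p := by omega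
        have hyj : y j = c - c' + 1 := by rw [hjp']; exact hyp
        have him : i < m := by
          rcases Nat.lt_or_ge i m with him | him
          · exact him
          · exfalso
            have hi' : i = m := by omega
            rw [hi', hxm] at htN
            omega
        have hgx := hxgap (i + 1) (by omega) (by omega)
        have hei : i + 1 - 1 = i := by omega
        rw [hei] at hgx
        obtain ⟨hxi'1, hxi'2⟩ := hxbd (i + 1) (by omega) (by omega)
        have hPex : ∃ u, 1 ≤ u ∧ u ≤ p ∧ x i + y j - 1 < x (i + 1) + y u - 1 := by
          refine ⟨p, hp, le_rfl, ?_⟩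
          rw [hyp]
          omega
        set u := Nat.find hPex with hu
        obtain ⟨hu1, hu2, hu3⟩ := Nat.find_spec hPex
        rw [← hu] at hu1 hu2 hu3
        rcases Nat.lt_or_ge 1 u with hugt | hule
        · -- u > 1 : predecessor occurrence is ≤ t
          have hmin := Nat.find_min hPex (show u - 1 < u by omega)
          push_neg at hmin
          have hle := hmin (by omega) (by omega)
          have hgy := hygap u hugt hu2
          obtain ⟨hyu1, hyu2⟩ := hybd u (by omega) hu2
          refine ⟨x (i + 1) + y u - 1, hmemS (i + 1) u (by omega) (by omega) (by omega) hu2,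
            hu3, ?_⟩
          omega
        · -- u = 1 : the start of the next copy
          have hu1' : u = 1 := by omega
          rw [hu1', hy1] at hu3
          refine ⟨x (i + 1) + y 1 - 1, hmemS (i + 1) 1 (by omega) (by omega) le_rfl hp, ?_, ?_⟩
          · rw [hy1]; exact hu3
          · rw [hy1]; omega
    -- now build the sorted list of all occurrence positions
    set l : List ℕ := S.sort (· ≤ ·) with hl
    have hlsort : l.Pairwise (· < ·) := S.sortedLT_sort.pairwise
    have hlmem : ∀ t, t ∈ l ↔ t ∈ S := fun t => Finset.mem_sort _
    have hlpair : ∀ (i j : ℕ) (hi : i < l.length) (hj : j < l.length), i < j → l[i] < l[j] :=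
      List.pairwise_iff_getElem.mp hlsort
    have h1l : (1 : ℕ) ∈ l := (hlmem 1).mpr hS1
    have hlpos : 0 < l.length := List.length_pos_iff.mpr (List.ne_nil_of_mem h1l)
    set M := l.length with hM
    refine ⟨M, fun k => l.getD (k - 1) 0, hlpos, ?_, ?_, ?_, ?_⟩
    · -- first position is 1
      have h0 : (0 : ℕ) < M := hlpos
      beta_reduce
      rw [show (1 : ℕ) - 1 = 0 from rfl, List.getD_eq_getElem _ _ h0]
      obtain ⟨iv, hiv⟩ := List.getElem_of_mem ((hlmem 1).mpr hS1)
      obtain ⟨hiv1, hiv2⟩ := hiv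
      rcases Nat.eq_zero_or_pos iv with h00 | h00
      · subst h00; exact hiv2
      · have := hlpair 0 iv h0 hiv1 h00
        rw [hiv2] at this
        have hmem0 : l[0] ∈ S := (hlmem _).mp (List.getElem_mem h0)
        have := (hSocc _ hmem0).1
        omega
    · -- last position is N
      have hMlt : M - 1 < M := by omega
      beta_reduce
      rw [List.getD_eq_getElem _ _ hMlt]
      obtain ⟨iv, hiv1, hiv2⟩ := List.getElem_of_mem ((hlmem N).mpr hSN)
      rcases Nat.lt_or_ge iv (M - 1) with hlt | hge
      · exfalso
        have := hlpair iv (M - 1) hiv1 hMlt hlt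
        rw [hiv2] at this
        have hmemM : l[M - 1] ∈ S := (hlmem _).mp (List.getElem_mem hMlt)
        have := (hSocc _ hmemM).2.1
        omega
      · have hiveq : iv = M - 1 := by omega
        subst hiveq
        have h' : l[M - 1] = N := hiv2
        omega
    · -- each position is an occurrence
      intro k hk1 hk2
      beta_reduce
      have hklt : k - 1 < M := by omega
      rw [List.getD_eq_getElem _ _ hklt]
      have hmemk : l[k - 1] ∈ S := (hlmem _).mp (List.getElem_mem hklt)
      exact (hSocc _ hmemk).2.2
    · -- consecutive gaps
      intro k hk1 hk2
      beta_reduce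
      have hklt : k - 1 < M := by omega
      have hklt' : k - 1 - 1 < M := by omega
      rw [List.getD_eq_getElem _ _ hklt, List.getD_eq_getElem _ _ hklt']
      have hstep : l[k - 1 - 1] < l[k - 1] := hlpair _ _ hklt' hklt (by omega)
      refine ⟨hstep, ?_⟩
      have hmema : l[k - 1 - 1] ∈ S := (hlmem _).mp (List.getElem_mem hklt')
      have hmemb : l[k - 1] ∈ S := (hlmem _).mp (List.getElem_mem hklt)
      have haN : l[k - 1 - 1] < N := by
        have := (hSocc _ hmemb).2.1
        omega
      obtain ⟨b, hbS, hb1, hb2⟩ := hSnext _ hmema haN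
      obtain ⟨iv, hiv1, hiv2⟩ := List.getElem_of_mem ((hlmem b).mpr hbS)
      rcases Nat.lt_or_ge iv (k - 1) with hlt | hge
      · rcases Nat.lt_or_ge iv (k - 1 - 1) with hlt' | hge'
        · exfalso
          have := hlpair iv (k - 1 - 1) hiv1 hklt' hlt'
          rw [hiv2] at this
          omega
        · have hbeq : l[k - 1 - 1] = b := by
            have h' : iv = k - 1 - 1 := by omega
            subst h'
            exact hiv2
          omega
      · rcases Nat.eq_or_lt_of_le hge with heq | hlt2
        · have hbeq : l[k - 1] = b := by
            subst heq
            exact hiv2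
          omega
        · have := hlpair (k - 1) iv hklt hiv1 hlt2
          rw [hiv2] at this
          omega
end

section
/- Let ≈ be an SCER. A string C of length c is a proper ≈-cover of T of length n if and only if C is a ≈-border of T and C is a ≈-cover of T[1:n−i] for some 1 ≤ i ≤ c. -/
variable {α : Type*}

lemma substr_take_eq (T : List α) (i j t : ℕ) (hj : j ≤ t) :
    substr (T.take t) i j = substr T i j := by
  simp [substr, List.take_take, Nat.min_eq_left hj]

lemma x_mono (x : ℕ → ℕ) (m : ℕ)
    (hg : ∀ k, 1 < k → k ≤ m → x (k - 1) < x k) :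
    ∀ k l, 1 ≤ k → k ≤ l → l ≤ m → x k ≤ x l := by
  intro k l hk hkl hlm
  induction l with
  | zero => omega
  | succ n ih =>
    rcases Nat.lt_or_ge k (n + 1) with hlt | hge
    · have hn1 : 1 ≤ n := by omega
      have := hg (n + 1) (by omega) hlm
      simp only [Nat.add_sub_cancel] at this
      exact le_trans (ih (by omega) (by omega)) (le_of_lt this)
    · have : k = n + 1 := by omega
      subst this; exact le_refl _

theorem stmt11 (r : List α → List α → Prop) (h : SCER r) (T C : List α) :
    IsProperCover r C T ↔
      (IsBorder r C T ∧
        ∃ i, 1 ≤ i ∧ i ≤ C.length ∧ IsCover r C (T.take (T.length - i))) := by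
  set n := T.length with hn
  set c := C.length with hc
  constructor
  · rintro ⟨⟨m, x, hm, hx1, hxm, hocc, hgap⟩, hlt⟩
    -- m ≥ 2
    have hm2 : 2 ≤ m := by
      by_contra hm2
      have : m = 1 := by omega
      subst this
      omega
    have hmono : ∀ k l, 1 ≤ k → k ≤ l → l ≤ m → x k ≤ x l :=
      x_mono x m (fun k h1 h2 => (hgap k h1 h2).1)
    have hg := hgap m (by omega) (le_refl m)
    -- c ≥ 1
    have hc1 : 1 ≤ c := by omega
    have hcn : c ≤ n := le_of_lt hlt
    -- border
    have hpre : r C (T.take c) := by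
      have := hocc 1 (le_refl 1) (by omega)
      rw [hx1] at this
      simpa [substr, show 1 + c - 1 = c by omega] using this
    have hsuf : r C (T.drop (n - c)) := by
      have := hocc m (by omega) (le_refl m)
      rw [hxm] at this
      have he : n - c + 1 + c - 1 = n := by omega
      rw [he] at this
      simpa [substr, hn, show n - c + 1 - 1 = n - c by omega] using this
    refine ⟨⟨hcn, hpre, hsuf⟩, ?_⟩
    -- the cover of the prefix
    set y := x (m - 1) with hy
    have hy1 : 1 ≤ y := by
      have := hmono 1 (m - 1) (le_refl 1) (by omega) (by omega)
      omega
    have hylt : y < n - c + 1 := by rw [hy, ← hxm]; exact hg.1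
    have hyge : n - c + 1 ≤ y + c := by rw [hy]; rw [hxm] at hg; exact hg.2
    refine ⟨n - (y + c - 1), by omega, by omega, m - 1, x, by omega, hx1, ?_, ?_, ?_⟩
    · have ht : n - (n - (y + c - 1)) = y + c - 1 := by omega
      rw [ht]
      simp only [hn.symm, List.length_take]
      omega
    · intro k hk1 hk
      have hxk : x k ≤ y := hmono k (m - 1) hk1 hk (by omega)
      have hle : x k + c - 1 ≤ y + c - 1 := by omega
      have ht : n - (n - (y + c - 1)) = y + c - 1 := by omega
      rw [ht, substr_take_eq T _ _ _ hle]
      exact hocc k hk1 (by omega)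
    · intro k hk1 hk
      exact hgap k hk1 (by omega)
  · rintro ⟨⟨hcn, hpre, hsuf⟩, i, hi1, hic, m, x, hm, hx1, hxm, hocc, hgap⟩
    have hc1 : 1 ≤ c := le_trans hi1 hic
    set t := n - i with ht
    have htlen : (T.take (n - i)).length = t := by
      simp [hn.symm, ht]
    -- c ≤ t from the first occurrence
    have hct : c ≤ t := by
      have := h.length_eq _ _ (hocc 1 (le_refl 1) hm)
      rw [hx1] at this
      have hlen : (substr (T.take (n - i)) 1 (1 + c - 1)).length
          = min (1 + c - 1) t := by
        simp [substr, htlen.symm]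
      rw [hlen] at this
      omega
    have hclt : c < n := by omega
    rw [htlen] at hxm
    have hmono : ∀ k l, 1 ≤ k → k ≤ l → l ≤ m → x k ≤ x l :=
      x_mono x m (fun k h1 h2 => (hgap k h1 h2).1)
    refine ⟨⟨m + 1, fun k => if k ≤ m then x k else n - c + 1, by omega,
      by simp [hm, hx1], by simp [hn, hc], ?_, ?_⟩, hclt⟩
    · intro k hk1 hk
      by_cases hkm : k ≤ m
      · simp only [hkm, if_pos]
        have hxk : x k ≤ t - c + 1 := by rw [← hxm]; exact hmono k m hk1 hkm (le_refl m)
        have hle : x k + c - 1 ≤ t := by omega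
        rw [← substr_take_eq T _ _ _ hle]
        exact hocc k hk1 hkm
      · have : k = m + 1 := by omega
        subst this
        simp only [hkm, if_neg, not_false_iff]
        have he : n - c + 1 + c - 1 = n := by omega
        rw [he]
        simpa [substr, hn, show n - c + 1 - 1 = n - c by omega] using hsuf
    · intro k hk1 hk
      by_cases hkm : k ≤ m
      · have h1 : k - 1 ≤ m := by omega
        simpa [hkm, h1] using hgap k hk1 hkm
      · have hke : k = m + 1 := by omega
        subst hke
        have h1 : m + 1 - 1 = m := by omega
        have hmm : ¬ (m + 1 ≤ m) := by omega
        simp only [h1, hmm, if_neg, not_false_iff, le_refl, if_pos, hm]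
        rw [hxm]
        constructor <;> omega
end

section
/- Let ≈ be an SCER and T a string of length n. If k ≤ l, S is a ≈-cover of T[1:n−k], and S is a left ≈-seed of the suffix T[n−l+1:n], then S is a left ≈-seed of T. -/
variable {α : Type*}

lemma substr_length (X : List α) (i j : ℕ) :
    (substr X i j).length = min j X.length - (i - 1) := by
  simp [substr]

lemma substr_take {X : List α} (i : ℕ) {j t : ℕ} (h : j ≤ t) :
    substr (X.take t) i j = substr X i j := by
  unfold substr
  rw [List.take_take, min_eq_left h]

lemma substr_drop {X : List α} {i : ℕ} (j d : ℕ) (hi : 1 ≤ i) :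
    substr (X.drop d) i j = substr X (d + i) (d + j) := by
  unfold substr
  rw [List.take_drop, List.drop_drop]
  congr 1
  omega

lemma seq_mono {x : ℕ → ℕ} {m : ℕ} (hx : ∀ k, 1 < k → k ≤ m → x (k-1) < x k) :
    ∀ i j, 1 ≤ i → i ≤ j → j ≤ m → x i ≤ x j := by
  intro i j hi hij hjm
  induction j with
  | zero => omega
  | succ j ih =>
    rcases Nat.eq_or_lt_of_le hij with h' | h'
    · rw [h']
    · have h1 : x i ≤ x j := ih (by omega) (by omega)
      have h2 := hx (j+1) (by omega) hjm
      simp only [Nat.add_sub_cancel] at h2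
      omega

lemma cover_length_le {r : List α → List α → Prop} (h : SCER r) {C T' : List α}
    (hc : IsCover r C T') : C.length ≤ T'.length := by
  obtain ⟨m, x, hm, hx1, hxm, hocc, _⟩ := hc
  by_contra hlt
  push_neg at hlt
  have h2 := h.length_eq _ _ (hocc m hm le_rfl)
  rw [substr_length] at h2
  omega

lemma cover_glue {r : List α → List α → Prop} (h : SCER r) {S T : List α} {k k2 l : ℕ}
    (hs : 1 ≤ S.length)
    (hk2k : k2 < k) (hkl : k ≤ l) (hl : l ≤ T.length)
    (h1 : IsCover r S (T.take (T.length - k)))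
    (h2 : IsCover r S ((T.drop (T.length - l)).take (l - k2))) :
    IsCover r S (T.take (T.length - k2)) := by
  set n := T.length with hn
  set s := S.length with hsdef
  have hS1 : s ≤ n - k := by
    have := cover_length_le h h1
    simp only [List.length_take] at this
    omega
  have hS2 : s ≤ l - k2 := by
    have := cover_length_le h h2
    simp only [List.length_take, List.length_drop] at this
    omega
  obtain ⟨m1, x, hm1, hx1, hxm1, hocc1, hstep1⟩ := h1
  obtain ⟨m2, y, hm2, hy1, hym2, hocc2, hstep2⟩ := h2
  simp only [List.length_take] at hxm1 hym2
  simp only [List.length_drop] at hym2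
  have hxm1' : x m1 = n - k - s + 1 := by rw [hxm1]; congr 1; omega
  have hym2' : y m2 = l - k2 - s + 1 := by rw [hym2]; congr 1; omega
  have xmono := seq_mono (fun a ha hb => (hstep1 a ha hb).1)
  have ymono := seq_mono (fun a ha hb => (hstep2 a ha hb).1)
  have hyge : ∀ j, 1 ≤ j → j ≤ m2 → 1 ≤ y j := by
    intro j hj1 hj2
    have := ymono 1 j le_rfl hj1 hj2
    omega
  have hex : ∃ j, 1 ≤ j ∧ j ≤ m2 ∧ x m1 < n - l + y j := by
    refine ⟨m2, hm2, le_rfl, ?_⟩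
    rw [hxm1', hym2']
    omega
  obtain ⟨j0, hj01, hj0m2, hj0x, hj0min⟩ :
      ∃ j0, 1 ≤ j0 ∧ j0 ≤ m2 ∧ x m1 < n - l + y j0 ∧
        ∀ w, w < j0 → ¬(1 ≤ w ∧ w ≤ m2 ∧ x m1 < n - l + y w) :=
    ⟨Nat.find hex, (Nat.find_spec hex).1, (Nat.find_spec hex).2.1, (Nat.find_spec hex).2.2,
      fun w hw => Nat.find_min hex hw⟩
  refine ⟨m1 + (m2 - j0) + 1,
    fun i => if i ≤ m1 then x i else n - l + y (j0 + (i - m1 - 1)), by omega, ?_, ?_, ?_, ?_⟩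
  · beta_reduce
    rw [if_pos hm1, hx1]
  · beta_reduce
    rw [if_neg (by omega)]
    have harg : j0 + (m1 + (m2 - j0) + 1 - m1 - 1) = m2 := by omega
    rw [harg, hym2']
    simp only [List.length_take]
    omega
  · intro i hi1 him
    beta_reduce
    by_cases hcase : i ≤ m1
    · rw [if_pos hcase]
      have occ := hocc1 i hi1 hcase
      have hxi : x i ≤ n - k - s + 1 := by
        have := xmono i m1 hi1 hcase le_rfl
        omega
      rw [substr_take _ (by omega : x i + s - 1 ≤ n - k)] at occ
      rw [substr_take _ (by omega : x i + s - 1 ≤ n - k2)]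
      exact occ
    · rw [if_neg hcase]
      set j := j0 + (i - m1 - 1) with hjdef
      have hj1 : 1 ≤ j := by omega
      have hjm2 : j ≤ m2 := by omega
      have occ := hocc2 j hj1 hjm2
      have hyj1 : 1 ≤ y j := hyge j hj1 hjm2
      have hyjub : y j ≤ l - k2 - s + 1 := by
        have := ymono j m2 hj1 hjm2 le_rfl
        omega
      rw [substr_take _ (by omega : y j + s - 1 ≤ l - k2)] at occ
      rw [substr_drop _ _ hyj1] at occ
      have harg : n - l + (y j + s - 1) = n - l + y j + s - 1 := by omega
      rw [harg] at occ
      rw [substr_take _ (by omega : n - l + y j + s - 1 ≤ n - k2)]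
      exact occ
  · intro i hi1 him
    beta_reduce
    by_cases hc1 : i ≤ m1
    · rw [if_pos hc1, if_pos (by omega : i - 1 ≤ m1)]
      exact hstep1 i hi1 hc1
    · by_cases hc2 : i = m1 + 1
      · rw [if_neg hc1, if_pos (by omega : i - 1 ≤ m1)]
        have harg : j0 + (i - m1 - 1) = j0 := by omega
        rw [harg]
        have he : i - 1 = m1 := by omega
        rw [he]
        constructor
        · exact hj0x
        · by_cases hj0one : j0 = 1
          · rw [hj0one, hy1, hxm1']
            omega
          · have hmin := hj0min (j0 - 1) (by omega)
            push_neg at hmin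
            have hle : n - l + y (j0 - 1) ≤ x m1 := by
              by_contra hcon
              push_neg at hcon
              exact absurd (hmin (by omega) (by omega)) (by omega)
            have hstep := (hstep2 j0 (by omega) hj0m2).2
            omega
      · rw [if_neg hc1, if_neg (by omega : ¬ (i - 1 ≤ m1))]
        set j := j0 + (i - m1 - 1) with hjdef
        have harg : j0 + (i - 1 - m1 - 1) = j - 1 := by omega
        rw [harg]
        have hstep := hstep2 j (by omega) (by omega)
        omega

theorem stmt13 (r : List α → List α → Prop) (h : SCER r) (T S : List α) (k l : ℕ)
    (hkl : k ≤ l) (hl : l ≤ T.length)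
    (h1 : IsCover r S (T.take (T.length - k)))
    (h2 : IsLeftSeed r S (T.drop (T.length - l))) :
    IsLeftSeed r S T := by
  obtain ⟨k2, l2, hk2l2, hl2S, hcov2, hsuf2⟩ := h2
  set n := T.length with hn
  have hdlen : (T.drop (n - l)).length = l := by
    simp only [List.length_drop]
    omega
  rw [hdlen] at hcov2 hsuf2
  have hlen := h.length_eq _ _ hsuf2
  simp only [List.length_take, List.length_drop] at hlen
  have hl2l : l2 ≤ l := by omega
  rw [List.drop_drop] at hsuf2
  rw [show (n - l) + (l - l2) = n - l2 from by omega] at hsuf2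
  by_cases hc : k ≤ l2
  · exact ⟨k, l2, hc, hl2S, h1, hsuf2⟩
  · push_neg at hc
    have hglue := cover_glue h (by omega) (by omega : k2 < k) hkl hl h1 hcov2
    exact ⟨k2, l2, hk2l2, hl2S, hglue, hsuf2⟩
end

section
/- Let ≈ be an SCER and T a string. For any 1 ≤ i ≤ n and any j with i − Border_T[i] ≤ j ≤ i, the prefix T[1:j] is a left ≈-seed of T[1:i] (all sufficiently long prefixes are left ≈-seeds). -/
variable {α : Type*}

theorem stmt14 (r : List α → List α → Prop) (h : SCER r) (T : List α) (Bd : ℕ → ℕ)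
    (hB : BorderArr r T Bd) (i j : ℕ) (h1 : 1 ≤ i) (h2 : i ≤ T.length)
    (h3 : i - Bd i ≤ j) (h4 : j ≤ i) :
    IsLeftSeed r (T.take j) (T.take i) := by
  obtain ⟨⟨B, hBlen, hblt, hBle, hBpre, hBsuf⟩, -⟩ := hB i h1 h2
  set b := Bd i with hb
  set T' := T.take i with hT'
  have hT'len : T'.length = i := by simp [hT']; omega
  set p := i - b with hpdef
  have hp1 : 1 ≤ p := by omega
  have hpj : p ≤ j := by omega
  have hj1 : 1 ≤ j := by omega
  have hbp : b + p = i := by omega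
  set S := T.take j with hS
  have hSlen : S.length = j := by simp [hS]; omega
  have hST' : S = T'.take j := by
    rw [hS, hT', List.take_take]; congr 1; omega
  rw [hBlen] at hBpre hBsuf
  rw [hT'len] at hBsuf
  have hps : r (T'.take b) (T'.drop p) := h.equiv.trans (h.equiv.symm hBpre) hBsuf
  -- occurrences of S at positions 1 + t*p
  have occ : ∀ t : ℕ, t * p + j ≤ i → r S (substr T' (1 + t * p) (1 + t * p + j - 1)) := by
    intro t
    induction t with
    | zero =>
      intro _
      simp only [Nat.zero_mul, Nat.add_zero]
      have e : 1 + j - 1 = j := by omega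
      rw [e, hST']
      show r (T'.take j) ((T'.take j).drop (1 - 1))
      simp only [Nat.sub_self, List.drop_zero]
      exact h.equiv.refl _
    | succ t ih =>
      intro ht
      have htp : (t + 1) * p = t * p + p := by ring
      rw [htp] at ht ⊢
      have ih' := ih (by omega)
      have hcong := h.substr_congr _ _ hps (1 + t * p) (1 + t * p + j - 1)
        (by omega) (by omega) (by simp [List.length_take, hT'len]; omega)
      have hL : substr (T'.take b) (1 + t * p) (1 + t * p + j - 1)
          = substr T' (1 + t * p) (1 + t * p + j - 1) := by
        simp only [substr, List.take_take]
        congr 2; omega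
      have hR : substr (T'.drop p) (1 + t * p) (1 + t * p + j - 1)
          = substr T' (1 + (t * p + p)) (1 + (t * p + p) + j - 1) := by
        simp only [substr, List.drop_take, List.drop_drop]
        congr 1
        · omega
        · congr 1; omega
      rw [hL, hR] at hcong
      exact h.equiv.trans ih' hcong
  -- borders of length b - t*p
  have bord : ∀ t : ℕ, t * p ≤ b → r (T'.take (b - t * p)) (T'.drop (i - (b - t * p))) := by
    intro t
    induction t with
    | zero =>
      intro _
      simp only [Nat.zero_mul, Nat.sub_zero]
      have : i - b = p := rfl
      rw [this]
      exact hps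
    | succ t ih =>
      intro ht
      have htp : (t + 1) * p = t * p + p := by ring
      rw [htp] at ht ⊢
      have ihc := ih (by omega)
      set c := b - t * p with hc
      have hcsub : b - (t * p + p) = c - p := by omega
      rw [hcsub]
      by_cases hcp : c ≤ p
      · have h0 : c - p = 0 := by omega
        rw [h0]
        simp only [List.take_zero, Nat.sub_zero]
        rw [← hT'len, List.drop_length]
        exact h.equiv.refl []
      · push_neg at hcp
        have h1' := h.substr_congr _ _ hps 1 (c - p) (le_refl 1) (by omega)
          (by simp [List.length_take, hT'len]; omega)
        have h2' := h.substr_congr _ _ ihc (p + 1) c (by omega) (by omega)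
          (by simp [List.length_take, hT'len]; omega)
        have hL1 : substr (T'.take b) 1 (c - p) = T'.take (c - p) := by
          simp only [substr, Nat.sub_self, List.drop_zero, List.take_take]
          congr 1; omega
        have hR1 : substr (T'.drop p) 1 (c - p) = (T'.take c).drop p := by
          simp only [substr, Nat.sub_self, List.drop_zero]
          exact List.drop_take.symm
        have hL2 : substr (T'.take c) (p + 1) c = (T'.take c).drop p := by
          simp only [substr, List.take_take, min_self, Nat.add_sub_cancel]
        have hR2 : substr (T'.drop (i - c)) (p + 1) c = T'.drop (i - (c - p)) := by
          have hlen : (T'.drop (i - c)).length = c := by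
            simp [List.length_drop, hT'len]; omega
          have htk : (T'.drop (i - c)).take c = T'.drop (i - c) := by
            have h' : (T'.drop (i - c)).take (T'.drop (i - c)).length = T'.drop (i - c) := List.take_length
            rwa [hlen] at h' 
          simp only [substr, Nat.add_sub_cancel]
          rw [htk, List.drop_drop]
          congr 1
          omega
        rw [hL1, hR1] at h1'
        rw [hL2, hR2] at h2'
        exact h.equiv.trans h1' h2'
  -- assemble
  obtain ⟨t0, k, hdm, hkp⟩ : ∃ t0 k, t0 * p + k = i - j ∧ k < p :=
    ⟨(i - j) / p, (i - j) % p,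
      by rw [Nat.mul_comm]; exact Nat.div_add_mod _ _, Nat.mod_lt _ (by omega)⟩
  refine ⟨k, j - p + k, by omega, by rw [hSlen]; omega, ?_, ?_⟩
  · -- cover
    rw [hT'len]
    have hUlen : (T'.take (i - k)).length = i - k := by
      simp [List.length_take, hT'len]
    refine ⟨t0 + 1, fun t => 1 + (t - 1) * p, by omega, by norm_num, ?_, ?_, ?_⟩
    · show 1 + (t0 + 1 - 1) * p = (T'.take (i - k)).length - S.length + 1
      rw [hUlen, hSlen, Nat.add_sub_cancel]
      omega
    · intro q hq1 hqm
      show r S (substr (T'.take (i - k)) (1 + (q - 1) * p) (1 + (q - 1) * p + S.length - 1))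
      rw [hSlen]
      have hle : (q - 1) * p ≤ t0 * p := Nat.mul_le_mul_right p (by omega)
      have hsub : substr (T'.take (i - k)) (1 + (q - 1) * p) (1 + (q - 1) * p + j - 1)
          = substr T' (1 + (q - 1) * p) (1 + (q - 1) * p + j - 1) := by
        simp only [substr, List.take_take]
        congr 2
        omega
      rw [hsub]
      exact occ (q - 1) (by omega)
    · intro q hq1 hqm
      show 1 + (q - 1 - 1) * p < 1 + (q - 1) * p ∧
        1 + (q - 1) * p ≤ 1 + (q - 1 - 1) * p + S.length
      rw [hSlen]
      have hq : q - 1 - 1 = q - 2 := by omega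
      have hq2 : q - 1 = (q - 2) + 1 := by omega
      rw [hq, hq2, Nat.succ_mul]
      omega
  · -- suffix
    rw [hT'len]
    have hl : j - p + k = b - t0 * p := by omega
    have hSl : S.take (j - p + k) = T'.take (j - p + k) := by
      rw [hST', List.take_take]
      congr 1; omega
    rw [hSl, hl]
    exact bord t0 (by omega)
end

section
/- Let ≈ be an SCER and T a string. Define LongestLSeedCov_T(i,j) = max({l : T[1:l] is a left ≈-seed of T[1:i] and a ≈-cover of T[1:j]} ∪ {0}). Then for all 1 ≤ j ≤ Border_T[i], LongestLSeedCov_T(i,j) = LongestLSeedCov_T(i−1,j). -/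
variable {α : Type*}

namespace Stmt18Aux

theorem substr_one (X : List α) (c : ℕ) : substr X 1 c = X.take c := by simp [substr]

theorem substr_take (X : List α) {N b : ℕ} (a : ℕ) (h : b ≤ N) :
    substr (X.take N) a b = substr X a b := by
  simp [substr, List.take_take, Nat.min_eq_left h]

theorem substr_substr (X : List α) (a b x y : ℕ) (hx : 1 ≤ x) :
    substr (substr X a b) x y = substr X (a-1+x) (min (a-1+y) b) := by
  simp [substr, List.take_drop, List.take_take, List.drop_drop]
  congr 1
  omega

theorem length_substr (X : List α) (a b : ℕ) :
    (substr X a b).length = min b X.length - (a-1) := by simp [substr]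

/-- occurrence of `T.take l` ending at position `e` (1-indexed, inclusive). -/
def OccE (r : List α → List α → Prop) (T : List α) (l e : ℕ) : Prop :=
  r (T.take l) (substr T (e - l + 1) e)

/-- `T.take l` has a chain of occurrences exactly covering `T[1..N]`. -/
inductive CovTo (r : List α → List α → Prop) (T : List α) (l : ℕ) : ℕ → Prop
  | base : OccE r T l l → CovTo r T l l
  | step {N' N : ℕ} : CovTo r T l N' → N' < N → N - l ≤ N' → OccE r T l N → CovTo r T l N

variable {r : List α → List α → Prop} {T : List α}

theorem covTo_le {l N : ℕ} (hc : CovTo r T l N) : l ≤ N := by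
  induction hc with
  | base _ => exact le_refl l
  | step _ h1 h2 _ ih => omega

theorem covTo_occ {l N : ℕ} (hc : CovTo r T l N) : OccE r T l N := by
  cases hc with
  | base h => exact h
  | step _ _ _ h => exact h

/-- cut an occurrence to a prefix. -/
theorem occ_cut (h : SCER r) {l e c : ℕ} (hlT : l ≤ T.length) (hle : l ≤ e)
    (ho : OccE r T l e) (hc1 : 1 ≤ c) (hcl : c ≤ l) :
    r (T.take c) (substr T (e - l + 1) (e - l + c)) := by
  have := h.substr_congr _ _ ho 1 c le_rfl hc1 (by simp [hlT, hcl])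
  rwa [substr_one, List.take_take, Nat.min_eq_left hcl,
    substr_substr _ _ _ _ _ le_rfl, show e-l+1-1+1 = e-l+1 by omega,
    show min (e-l+1-1+c) e = e-l+c by omega] at this

theorem shift (h : SCER r) {i B : ℕ} (hBi : B < i) (hiT : i ≤ T.length)
    (hbord : r (T.take B) (substr T (i - B + 1) i)) {x y : ℕ}
    (hx : 1 ≤ x) (hxy : x ≤ y) (hyB : y ≤ B) :
    r (substr T x y) (substr T (x + (i - B)) (y + (i - B))) := by
  have hBT : B ≤ T.length := by omega
  have hc := h.substr_congr _ _ hbord x y hx hxy (by rw [List.length_take]; omega)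
  rw [substr_take T x hyB, substr_substr T _ _ _ _ hx,
    show i - B + 1 - 1 + x = x + (i - B) by omega,
    show min (i - B + 1 - 1 + y) i = y + (i - B) by omega] at hc
  exact hc

theorem occ_lift (h : SCER r) {i B : ℕ} (hBi : B < i) (hiT : i ≤ T.length)
    (hbord : r (T.take B) (substr T (i - B + 1) i)) {l e : ℕ}
    (hl : 1 ≤ l) (hle : l ≤ e) (heB : e ≤ B) (ho : OccE r T l e) :
    OccE r T l (e + (i - B)) := by
  have hs := shift h hBi hiT hbord (x := e - l + 1) (y := e) (by omega) (by omega) heB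
  unfold OccE at ho ⊢
  rw [show e + (i-B) - l + 1 = (e - l + 1) + (i - B) by omega]
  exact h.equiv.trans ho hs

theorem covTo_isCover (h : SCER r) {l N : ℕ} (hl : 1 ≤ l) (hN : N ≤ T.length)
    (hc : CovTo r T l N) : IsCover r (T.take l) (T.take N) := by
  have hlN := covTo_le hc
  have hlT : l ≤ T.length := le_trans hlN hN
  have aux : ∃ (m : ℕ) (x : ℕ → ℕ), 1 ≤ m ∧ x 1 = 1 ∧ x m = N - l + 1 ∧
      (∀ t, 1 ≤ t → t ≤ m → 1 ≤ x t ∧ x t + l - 1 ≤ N ∧ OccE r T l (x t + l - 1)) ∧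
      (∀ t, 1 < t → t ≤ m → x (t - 1) < x t ∧ x t ≤ x (t - 1) + l) := by
    clear hN hlT hlN
    induction hc with
    | base hb =>
        refine ⟨1, fun _ => 1, le_rfl, rfl, by show (1:ℕ) = l - l + 1; omega,
          fun t h1 h2 => ⟨le_rfl, by show 1 + l - 1 ≤ l; omega, ?_⟩,
          fun t h1 h2 => by omega⟩
        rw [show 1 + l - 1 = l by omega]; exact hb
    | @step N' N hc' hlt hge ho ih =>
        obtain ⟨m, x, hm, hx1, hxm, hocc, hgap⟩ := ih
        have hlN' := covTo_le hc'
        refine ⟨m + 1, fun t => if t ≤ m then x t else N - l + 1, by omega, ?_, ?_, ?_, ?_⟩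
        · simp only [if_pos hm]; exact hx1
        · simp
        · intro t h1 h2
          by_cases htm : t ≤ m
          · simp only [if_pos htm]
            exact ⟨(hocc t h1 htm).1, by have := (hocc t h1 htm).2.1; omega, (hocc t h1 htm).2.2⟩
          · simp only [if_neg htm]
            refine ⟨by omega, by omega, ?_⟩
            rw [show N - l + 1 + l - 1 = N by omega]; exact ho
        · intro t h1 h2
          by_cases htm : t ≤ m
          · have ht1 : t - 1 ≤ m := by omega
            simp only [if_pos htm, if_pos ht1]; exact hgap t h1 htm
          · have ht1 : t - 1 ≤ m := by omega
            simp only [if_neg htm, if_pos ht1]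
            rw [show t - 1 = m by omega, hxm]
            omega
  obtain ⟨m, x, hm, hx1, hxm, hocc, hgap⟩ := aux
  have hLl : (T.take l).length = l := by simp [hlT]
  have hLN : (T.take N).length = N := by simp [hN]
  refine ⟨m, x, hm, hx1, ?_, ?_, ?_⟩
  · rw [hLl, hLN]; exact hxm
  · intro t h1 h2
    have h3 := (hocc t h1 h2).2.2
    have hb := (hocc t h1 h2).2.1
    have hp := (hocc t h1 h2).1
    rw [hLl, substr_take T (x t) hb]
    unfold OccE at h3
    rwa [show x t + l - 1 - l + 1 = x t by omega] at h3
  · intro t h1 h2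
    rw [hLl]; exact hgap t h1 h2

theorem isCover_covTo (h : SCER r) {l N : ℕ} (hl : 1 ≤ l) (hlT : l ≤ T.length)
    (hlN : l ≤ N) (hN : N ≤ T.length) (hc : IsCover r (T.take l) (T.take N)) :
    CovTo r T l N := by
  obtain ⟨m, x, hm, hx1, hxm, hocc, hgap⟩ := hc
  have hLl : (T.take l).length = l := by simp [hlT]
  have hLN : (T.take N).length = N := by simp [hN]
  rw [hLl, hLN] at hxm
  have mono : ∀ dt t, 1 ≤ t → t + dt = m → x t ≤ x m := by
    intro dt
    induction dt with
    | zero =>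
        intro t h1 h2
        have : t = m := by omega
        rw [this]
    | succ d ih =>
        intro t h1 h2
        have h3 := hgap (t+1) (by omega) (by omega)
        rw [show t + 1 - 1 = t by omega] at h3
        have h4 := ih (t+1) (by omega) (by omega)
        omega
  have xpos : ∀ t, 1 ≤ t → t ≤ m → 1 ≤ x t := by
    intro t
    induction t with
    | zero => intro h1 _; omega
    | succ s ih =>
        intro _ h2
        rcases Nat.eq_zero_or_pos s with hs0 | hs1
        · subst hs0; rw [hx1]
        · have hg := hgap (s+1) (by omega) h2
          rw [show s + 1 - 1 = s by omega] at hg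
          have := ih hs1 (by omega)
          omega
  have occT : ∀ t, 1 ≤ t → t ≤ m → OccE r T l (x t + l - 1) := by
    intro t h1 h2
    have hb : x t + l - 1 ≤ N := by
      have := mono (m - t) t h1 (by omega); omega
    have hp := xpos t h1 h2
    have h5 := hocc t h1 h2
    rw [hLl, substr_take T (x t) hb] at h5
    unfold OccE
    rwa [show x t + l - 1 - l + 1 = x t by omega]
  have climb : ∀ t, 1 ≤ t → t ≤ m → CovTo r T l (x t + l - 1) := by
    intro t
    induction t with
    | zero => omega
    | succ s ih =>
        intro h1 h2
        rcases Nat.eq_zero_or_pos s with hs0 | hs1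
        · subst hs0
          have hb := occT 1 le_rfl h2
          rw [hx1] at hb ⊢
          rw [show 1 + l - 1 = l by omega] at hb ⊢
          exact CovTo.base hb
        · have hc' := ih hs1 (by omega)
          have hg := hgap (s+1) (by omega) h2
          rw [show s + 1 - 1 = s by omega] at hg
          exact CovTo.step hc' (by omega) (by omega) (occT (s+1) (by omega) h2)
  have := climb m (by omega) le_rfl
  rwa [hxm, show N - l + 1 + l - 1 = N by omega] at this

theorem cover_len_le (h : SCER r) {C : List α} {N : ℕ} (hN : N ≤ T.length)
    (hc : IsCover r C (T.take N)) : C.length ≤ N := by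
  obtain ⟨m, x, hm, hx1, hxm, hocc, hgap⟩ := hc
  have h1 := hocc 1 le_rfl hm
  rw [hx1] at h1
  have h2 := h.length_eq _ _ h1
  rw [length_substr, List.length_take] at h2
  omega

open Classical in
theorem engine (h : SCER r) {i B l k : ℕ} (hl : 1 ≤ l) (hlB : l ≤ B) (hBi : B < i)
    (hiT : i ≤ T.length) (hkl : k + 1 ≤ l)
    (hbord : r (T.take B) (substr T (i - B + 1) i))
    (hcov : IsCover r (T.take l) (T.take (i - 1 - k))) :
    IsLeftSeed r (T.take l) (T.take i) := by
  have hlT : l ≤ T.length := by omega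
  have hLl : (T.take l).length = l := by simp [hlT]
  have hLi : (T.take i).length = i := by simp [hiT]
  have hlP : l ≤ i - 1 - k := by
    have := cover_len_le h (N := i - 1 - k) (by omega) hcov
    omega
  have covP : CovTo r T l (i - 1 - k) :=
    isCover_covTo h hl hlT hlP (by omega) hcov
  set M := Nat.findGreatest (CovTo r T l) i with hMdef
  have hPM : i - 1 - k ≤ M := Nat.le_findGreatest (by omega) covP
  have hMi : M ≤ i := Nat.findGreatest_le i
  have hMcov : CovTo r T l M := by
    rw [hMdef]
    exact Nat.findGreatest_spec (m := i - 1 - k) (by omega) covP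
  have hmax : ∀ N, M < N → N ≤ i → ¬ CovTo r T l N := by
    intro N h1 h2
    exact Nat.findGreatest_is_greatest h1 h2
  have hlM : l ≤ M := covTo_le hMcov
  have hMB : B < M := by
    rcases le_or_gt (i - B) l with hpl | hpl
    · by_contra hMB
      push_neg at hMB
      have ho2 := occ_lift h hBi hiT hbord hl hlM hMB (covTo_occ hMcov)
      have hc2 : CovTo r T l (M + (i - B)) :=
        CovTo.step hMcov (by omega) (by omega) ho2
      exact hmax (M + (i - B)) (by omega) (by omega) hc2
    · omega
  rcases eq_or_lt_of_le hMi with hMeq | hMlt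
  · -- full cover of T[1:i]
    refine ⟨0, 0, le_rfl, by omega, ?_, ?_⟩
    · rw [hLi, Nat.sub_zero, show (T.take i).take i = T.take i from by
        rw [List.take_take, Nat.min_self]]
      rw [← hMeq]
      exact covTo_isCover h hl (by omega) hMcov
    · rw [hLi, Nat.sub_zero, List.take_zero, List.drop_eq_nil_of_le (by rw [hLi])]
      exact h.equiv.refl []
  · set D := i - M with hDdef
    have hD1 : 1 ≤ D := by omega
    have hDl : D ≤ l := by omega
    have W : ∀ N, CovTo r T l N → B ≤ N → ∃ e, l ≤ e ∧ OccE r T l e ∧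
        ((B ≤ e ∧ e + D ≤ B + l) ∨ (e < B ∧ B < e + D)) := by
      intro N hc
      induction hc with
      | base hb => intro hBN; exact ⟨l, le_rfl, hb, Or.inl ⟨hBN, by omega⟩⟩
      | @step N' N hc' hlt hge ho ih =>
          intro hBN
          rcases le_or_gt B N' with hBN' | hN'B
          · exact ih hBN'
          · rcases le_or_gt (N + D) (B + l) with hsmall | hbig
            · exact ⟨N, by have := covTo_le hc'; omega, ho, Or.inl ⟨hBN, hsmall⟩⟩
            · exact ⟨N', covTo_le hc', covTo_occ hc',
                Or.inr ⟨hN'B, by have := covTo_le hc'; omega⟩⟩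
    obtain ⟨e, hle, hocc, hcase⟩ := W M hMcov (le_of_lt hMB)
    rcases hcase with ⟨hBe, heD⟩ | ⟨heB, hBeD⟩
    · rcases eq_or_lt_of_le hBe with hEB | hBe'
      · exfalso
        have ho2 := occ_lift h hBi hiT hbord hl hle (le_of_eq hEB.symm) hocc
        have hc2 : CovTo r T l (e + (i - B)) :=
          CovTo.step hMcov (by omega) (by omega) ho2
        exact hmax (e + (i - B)) (by omega) (by omega) hc2
      · -- main witness
        set d := B + l - e with hddef
        have hd1 : 1 ≤ d := by omega
        have hdl : d < l := by omega
        have hDd : D ≤ d := by omega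
        have hcut := occ_cut h hlT hle hocc hd1 (le_of_lt hdl)
        rw [show e - l + d = B by omega] at hcut
        have hshift := shift h hBi hiT hbord (x := e - l + 1) (y := B)
          (by omega) (by omega) le_rfl
        rw [show B + (i - B) = i by omega] at hshift
        have hfin := h.equiv.trans hcut hshift
        refine ⟨D, d, hDd, by omega, ?_, ?_⟩
        · rw [hLi, show (T.take i).take (i - D) = T.take M from by
            rw [List.take_take]; congr 1; omega]
          exact covTo_isCover h hl (by omega) hMcov
        · rw [hLi, show (T.take l).take d = T.take d from by
            rw [List.take_take]; congr 1; omega]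
          rw [show (T.take i).drop (i - d) = substr T (e - l + 1 + (i - B)) i from by
            simp only [substr]; congr 1; omega]
          exact hfin
    · exfalso
      have ho2 := occ_lift h hBi hiT hbord hl hle (le_of_lt heB) hocc
      have hc2 : CovTo r T l (e + (i - B)) :=
        CovTo.step hMcov (by omega) (by omega) ho2
      exact hmax (e + (i - B)) (by omega) (by omega) hc2

theorem shrink (h : SCER r) {l i : ℕ} (hl : 1 ≤ l) (hli : l < i) (hiT : i ≤ T.length)
    (hseed : IsLeftSeed r (T.take l) (T.take i)) :
    IsLeftSeed r (T.take l) (T.take (i - 1)) := by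
  have hlT : l ≤ T.length := by omega
  have hLl : (T.take l).length = l := by simp [hlT]
  have hLi : (T.take i).length = i := by simp [hiT]
  have hLi1 : (T.take (i-1)).length = i - 1 := by
    rw [List.length_take]; omega
  obtain ⟨k, l', hkl', hl'l, hcov, hsuf⟩ := hseed
  rw [hLl] at hl'l
  rw [hLi] at hcov hsuf
  rcases Nat.eq_zero_or_pos k with hk0 | hkpos
  · -- k = 0 : cover of the whole T[1:i]
    subst hk0
    rw [Nat.sub_zero, show (T.take i).take i = T.take i from by
      rw [List.take_take, Nat.min_self]] at hcov
    have hct : CovTo r T l i := isCover_covTo h hl hlT (by omega) (by omega) hcov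
    cases hct with
    | base hb => omega
    | @step N' _ hc' hlt hge ho =>
        have hlN' := covTo_le hc'
        refine ⟨(i-1) - N', l - 1, by omega, by rw [hLl]; omega, ?_, ?_⟩
        · rw [hLi1, show i - 1 - ((i-1) - N') = N' from by omega,
            show (T.take (i-1)).take N' = T.take N' from by
              rw [List.take_take]; congr 1; omega]
          exact covTo_isCover h hl (by omega) hc'
        · rw [hLi1]
          rcases eq_or_lt_of_le hl with h1l | h1l
          · rw [show l - 1 = 0 from by omega, List.take_zero,
              List.drop_eq_nil_of_le (by rw [hLi1]; omega)]
            exact h.equiv.refl []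
          · have hcut := occ_cut h hlT (by omega : l ≤ i) ho
              (by omega : 1 ≤ l - 1) (by omega)
            rw [show i - l + (l - 1) = i - 1 by omega] at hcut
            rw [show (T.take l).take (l-1) = T.take (l-1) from by
              rw [List.take_take]; congr 1; omega]
            rw [show (T.take (i-1)).drop (i - 1 - (l - 1)) = substr T (i - l + 1) (i-1) from by
              simp only [substr]; congr 1; omega]
            exact hcut
  · -- k ≥ 1 : shift witness down by one
    have hl'1 : 1 ≤ l' := le_trans hkpos hkl'
    refine ⟨k - 1, l' - 1, by omega, by rw [hLl]; omega, ?_, ?_⟩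
    · rw [hLi1, show i - 1 - (k-1) = i - k from by omega,
        show (T.take (i-1)).take (i-k) = T.take (i-k) from by
          rw [List.take_take]; congr 1; omega]
      rw [show (T.take i).take (i - k) = T.take (i-k) from by
        rw [List.take_take]; congr 1; omega] at hcov
      exact hcov
    · rw [hLi1]
      rcases Nat.lt_or_ge l' 2 with hl'2 | hl'2
      · rw [show l' - 1 = 0 from by omega, List.take_zero,
          List.drop_eq_nil_of_le (by rw [hLi1]; omega)]
        exact h.equiv.refl []
      · -- l' ≥ 2: cut the suffix relation
        rw [show (T.take l).take l' = T.take l' from by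
            rw [List.take_take]; congr 1; omega,
          show (T.take i).drop (i - l') = substr T (i - l' + 1) i from by
            simp [substr]] at hsuf
        have hocc' : OccE r T l' i := by
          unfold OccE; exact hsuf
        have hcut := occ_cut h (l := l') (e := i) (by omega) (by omega) hocc'
          (by omega : 1 ≤ l' - 1) (by omega)
        rw [show i - l' + (l' - 1) = i - 1 by omega] at hcut
        rw [show (T.take l).take (l' - 1) = T.take (l' - 1) from by
          rw [List.take_take]; congr 1; omega]
        rw [show (T.take (i-1)).drop (i - 1 - (l' - 1)) = substr T (i - l' + 1) (i - 1) from by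
          simp only [substr]; congr 1; omega]
        exact hcut

end Stmt18Aux

open Stmt18Aux in
theorem stmt18 (r : List α → List α → Prop) (h : SCER r) (T : List α) (Bd : ℕ → ℕ)
    (hB : BorderArr r T Bd) (i j a b : ℕ)
    (h1 : 1 ≤ i) (h2 : i ≤ T.length) (h3 : 1 ≤ j) (h4 : j ≤ Bd i)
    (ha : IsGreatest (insert 0 {l | IsLeftSeed r (T.take l) (T.take i) ∧
      IsCover r (T.take l) (T.take j)}) a)
    (hb : IsGreatest (insert 0 {l | IsLeftSeed r (T.take l) (T.take (i - 1)) ∧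
      IsCover r (T.take l) (T.take j)}) b) :
    a = b := by
  classical
  obtain ⟨hBmem, hBub⟩ := hB i h1 h2
  obtain ⟨Bl, hBlen, hBlt, hBord⟩ := hBmem
  have hB1 : 1 ≤ Bd i := le_trans h3 h4
  have hLi : (T.take i).length = i := by simp [h2]
  have hb1 : r Bl ((T.take i).take Bl.length) := hBord.2.1
  have hb2 : r Bl ((T.take i).drop ((T.take i).length - Bl.length)) := hBord.2.2
  rw [hBlen] at hb1 hb2
  rw [hLi] at hb2
  rw [show (T.take i).take (Bd i) = T.take (Bd i) from by
    rw [List.take_take]; congr 1; omega] at hb1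
  rw [show (T.take i).drop (i - Bd i) = substr T (i - Bd i + 1) i from by
    simp [substr]] at hb2
  have hbord : r (T.take (Bd i)) (substr T (i - Bd i + 1) i) :=
    h.equiv.trans (h.equiv.symm hb1) hb2
  have memBound : ∀ l, IsCover r (T.take l) (T.take j) → 0 < (T.take l).length →
      1 ≤ l ∧ l ≤ j ∧ l ≤ T.length := by
    intro l hcov hpos
    have hjT : j ≤ T.length := by omega
    have hlen := cover_len_le h (N := j) hjT hcov
    have hLl : (T.take l).length = min l T.length := by simp
    omega
  apply le_antisymm
  · rcases Set.mem_insert_iff.mp ha.1 with ha0 | hamem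
    · exact ha0 ▸ Nat.zero_le b
    · obtain ⟨hseedA, hcovA⟩ := hamem
      have hpos : 0 < (T.take a).length := by
        obtain ⟨k, l', _, hl', _, _⟩ := hseedA; omega
      obtain ⟨ha1, haj, haT⟩ := memBound a hcovA hpos
      have hseed' : IsLeftSeed r (T.take a) (T.take (i-1)) :=
        shrink h ha1 (by omega) h2 hseedA
      exact hb.2 (Set.mem_insert_iff.mpr (Or.inr ⟨hseed', hcovA⟩))
  · rcases Set.mem_insert_iff.mp hb.1 with hb0 | hbmem
    · exact hb0 ▸ Nat.zero_le a
    · obtain ⟨hseedB, hcovB⟩ := hbmem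
      have hpos : 0 < (T.take b).length := by
        obtain ⟨k, l', _, hl', _, _⟩ := hseedB; omega
      obtain ⟨hb1', hbj, hbT⟩ := memBound b hcovB hpos
      obtain ⟨k, l', hkl', hl'b, hcovP, _⟩ := hseedB
      have hLb : (T.take b).length = b := by simp [hbT]
      rw [hLb] at hl'b
      have hLi1 : (T.take (i-1)).length = i - 1 := by
        rw [List.length_take]; omega
      rw [hLi1] at hcovP
      rw [show (T.take (i-1)).take (i - 1 - k) = T.take (i - 1 - k) from by
        rw [List.take_take]; congr 1; omega] at hcovP
      have hseed' : IsLeftSeed r (T.take b) (T.take i) :=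
        engine h hb1' (le_trans hbj h4) (by omega) h2 (by omega) hbord hcovP
      exact ha.2 (Set.mem_insert_iff.mpr (Or.inr ⟨hseed', hcovB⟩))
end

section
/- Let ≈ be an SCER and T a string of length n. If a prefix S = T[1:j] is not a left ≈-seed of T[1:i−1] for some j ≤ i−1, then S is not a left ≈-seed of T[1:i] (being a left ≈-seed is monotone: once a prefix ceases to be a left ≈-seed of a prefix of T, it is not a left ≈-seed of any longer prefix). -/
variable {α : Type*}

lemma substr_take_of_le (X : List α) (a p q : ℕ) (hq : q ≤ a) :
    substr (X.take a) p q = substr X p q := by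
  simp [substr, List.take_take, Nat.min_eq_left hq]

lemma xmono {m c : ℕ} {x : ℕ → ℕ}
    (hg : ∀ k, 1 < k → k ≤ m → x (k - 1) < x k ∧ x k ≤ x (k - 1) + c) :
    ∀ a b, 1 ≤ a → a ≤ b → b ≤ m → x a ≤ x b := by
  intro a b ha hab hbm
  induction b with
  | zero => omega
  | succ n ih =>
    rcases Nat.eq_or_lt_of_le hab with rfl | hlt
    · exact le_rfl
    · have h1 : x n ≤ x (n + 1) := by
        have := (hg (n + 1) (by omega) hbm).1
        simpa using this.le
      exact le_trans (ih (by omega) (by omega)) h1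

lemma suffix_shift (T : List α) (i l : ℕ) (hl : 1 ≤ l) (hli : l ≤ i - 1) (h1 : 1 ≤ i)
    (_h2 : i ≤ T.length) :
    substr ((T.take i).drop (i - l)) 1 (l - 1) = (T.take (i - 1)).drop (i - 1 - (l - 1)) := by
  simp only [substr, Nat.sub_self, List.drop_zero]
  rw [show i - 1 - (l - 1) = i - l from by omega]
  rw [List.drop_take, List.drop_take, List.take_take]
  congr 1
  omega

theorem stmt19 (r : List α → List α → Prop) (h : SCER r) (T : List α) (i j : ℕ)
    (h1 : 1 ≤ i) (h2 : i ≤ T.length) (h3 : j ≤ i - 1)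
    (hn : ¬ IsLeftSeed r (T.take j) (T.take (i - 1))) :
    ¬ IsLeftSeed r (T.take j) (T.take i) := by
  intro hls
  apply hn
  obtain ⟨k, l, hkl, hlS, hcov, hsuf⟩ := hls
  have hSlen : (T.take j).length = j := by
    rw [List.length_take]; omega
  rw [hSlen] at hlS
  have hTi : (T.take i).length = i := by rw [List.length_take]; omega
  have hTi1 : (T.take (i - 1)).length = i - 1 := by rw [List.length_take]; omega
  rw [hTi] at hcov hsuf
  have hji : j ≤ i - 1 := h3
  have hj1 : 1 ≤ j := by omega
  rw [IsLeftSeed, hTi1]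
  rcases Nat.eq_zero_or_pos k with rfl | hkpos
  · -- k = 0 : the cover covers all of T.take i
    obtain ⟨m, x, hm, hx1, hxm, hocc, hgap⟩ := hcov
    rw [hSlen] at hocc hgap hxm
    have hlen0 : ((T.take i).take (i - 0)).length = i := by
      rw [List.length_take, hTi]; omega
    rw [hlen0] at hxm
    -- m = 1 is impossible
    rcases Nat.eq_or_lt_of_le hm with rfl | hm2
    · omega
    have hm2' : 2 ≤ m := hm2
    have hgm := hgap m (by omega) le_rfl
    have hxm1lt : x (m - 1) < i - j + 1 := by omega
    have hxm1pos : 1 ≤ x (m - 1) := by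
      have := xmono hgap 1 (m - 1) le_rfl (by omega) (by omega)
      omega
    have hxm1ge : i - j + 1 ≤ x (m - 1) + j := by omega
    refine ⟨i - j - x (m - 1), j - 1, by omega, by omega, ?_, ?_⟩
    · -- cover of T.take (i-1) truncated
      have hnewlen : ((T.take (i - 1)).take (i - 1 - (i - j - x (m - 1)))).length
          = x (m - 1) + j - 1 := by
        rw [List.length_take, hTi1]; omega
      refine ⟨m - 1, x, by omega, hx1, ?_, ?_, ?_⟩
      · rw [hSlen, hnewlen]
        omega
      · intro u hu1 hum
        rw [hSlen]
        have hmono : x u ≤ x (m - 1) := xmono hgap u (m - 1) hu1 hum (by omega)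
        have hoccu := hocc u hu1 (by omega)
        rw [substr_take_of_le _ _ _ _ (show x u + j - 1 ≤ i - 1 - (i - j - x (m-1)) by omega),
            substr_take_of_le _ _ _ _ (show x u + j - 1 ≤ i - 1 by omega)]
        rwa [substr_take_of_le _ _ _ _ (show x u + j - 1 ≤ i - 0 by omega),
            substr_take_of_le _ _ _ _ (show x u + j - 1 ≤ i by omega)] at hoccu
      · intro u hu1 hum
        rw [hSlen]
        exact hgap u hu1 (by omega)
    · -- suffix condition with l' = j - 1
      have hoccm := hocc m (by omega) le_rfl
      rw [substr_take_of_le _ _ _ _ (show x m + j - 1 ≤ i - 0 by omega),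
          substr_take_of_le _ _ _ _ (show x m + j - 1 ≤ i by omega)] at hoccm
      rw [hxm, show i - j + 1 + j - 1 = i from by omega] at hoccm
      have hsub : substr T (i - j + 1) i = (T.take i).drop (i - j) := by
        simp [substr]
      rw [hsub] at hoccm
      rcases Nat.eq_or_lt_of_le hj1 with hj1' | hj2
      -- j = 1 case: take 0 on both sides
      · have hj' : j = 1 := hj1'.symm
        subst hj'
        simp only [Nat.sub_self, List.take_zero]
        have : (T.take (i - 1)).drop (i - 1 - 0) = [] := by
          apply List.drop_eq_nil_of_le
          rw [hTi1]; omega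
        rw [this]
        exact h.equiv.refl []
      · have hcongr := h.substr_congr _ _ hoccm 1 (j - 1) le_rfl (by omega)
          (by rw [hSlen]; omega)
        have e1 : substr (T.take j) 1 (j - 1) = (T.take j).take (j - 1) := by
          simp [substr]
        rw [e1, suffix_shift T i j hj1 hji h1 h2] at hcongr
        exact hcongr
  · -- k ≥ 1 : shift the witnesses down by one
    have hl1 : 1 ≤ l := le_trans hkpos hkl
    refine ⟨k - 1, l - 1, by omega, by omega, ?_, ?_⟩
    · have e : (T.take (i - 1)).take (i - 1 - (k - 1)) = (T.take i).take (i - k) := by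
        rw [List.take_take, List.take_take]
        congr 1; omega
      rw [e]; exact hcov
    · rcases Nat.eq_or_lt_of_le hl1 with hl1' | hl2
      · have : l = 1 := hl1'.symm
        subst this
        simp only [Nat.sub_self, List.take_zero]
        have : (T.take (i - 1)).drop (i - 1 - 0) = [] := by
          apply List.drop_eq_nil_of_le
          rw [hTi1]; omega
        rw [this]
        exact h.equiv.refl []
      · have hcongr := h.substr_congr _ _ hsuf 1 (l - 1) le_rfl (by omega)
          (by rw [List.length_take, hSlen]; omega)
        have e1 : substr ((T.take j).take l) 1 (l - 1) = (T.take j).take (l - 1) := by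
          simp only [substr, Nat.sub_self, List.drop_zero, List.take_take]
          congr 1; omega
        rw [e1, suffix_shift T i l hl1 (by omega) h1 h2] at hcongr
        exact hcongr
end
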